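/- Let A = {(0,0),(1,1),(3,0),(0,3)} ⊂ ℤ². Then for every t ≥ 0, |tA| = (3t² + 3t + 2)/2. -/

import Mathlib

open Pointwise Finset

noncomputable def Bt (t : ℕ) : Finset (ℤ × ℤ) :=
  (Finset.Icc ((0:ℤ),(0:ℤ)) ((3*t : ℤ), (3*t : ℤ))).filter
    (fun p => p.1 + p.2 ≤ 3*t ∧ (3:ℤ) ∣ (p.1 - p.2))

lemma mem_Bt {t : ℕ} {p : ℤ × ℤ} :
    p ∈ Bt t ↔ 0 ≤ p.1 ∧ 0 ≤ p.2 ∧ p.1 + p.2 ≤ 3*t ∧ (3:ℤ) ∣ (p.1 - p.2) := by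
  simp only [Bt, Finset.mem_filter, Finset.mem_Icc, Prod.le_def]
  constructor
  · rintro ⟨⟨⟨h1,h2⟩,⟨h3,h4⟩⟩,h5,h6⟩; exact ⟨h1,h2,h5,h6⟩
  · rintro ⟨h1,h2,h3,h4⟩; exact ⟨⟨⟨h1,h2⟩,by omega, by omega⟩, h3, h4⟩

lemma Bt_add (t : ℕ) :
    Bt t + ({(0,0), (1,1), (3,0), (0,3)} : Finset (ℤ × ℤ)) = Bt (t+1) := by
  ext p
  simp only [Finset.mem_add, mem_Bt, Finset.mem_insert, Finset.mem_singleton]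
  constructor
  · rintro ⟨q, hq, a, ha, rfl⟩
    rcases ha with rfl | rfl | rfl | rfl <;>
      simp only [Prod.fst_add, Prod.snd_add] <;>
      push_cast <;>
      refine ⟨by omega, by omega, by push_cast; omega, ?_⟩ <;>
      · obtain ⟨h1,h2,h3,h4⟩ := hq; omega
  · rintro ⟨h1, h2, h3, h4⟩
    push_cast at h3 ⊢
    by_cases hs : p.1 + p.2 ≤ 3 * t
    · exact ⟨p, ⟨h1, h2, hs, h4⟩, (0,0), by simp, by simp⟩
    · by_cases hs2 : p.1 + p.2 ≤ 3 * t + 2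
      · refine ⟨(p.1 - 1, p.2 - 1), ⟨by omega, by omega, by omega, by omega⟩,
          (1,1), by simp, ?_⟩
        ext <;> simp
      · by_cases hx : 3 ≤ p.1
        · refine ⟨(p.1 - 3, p.2), ⟨by omega, h2, by omega, by omega⟩,
            (3,0), by simp, ?_⟩
          ext <;> simp
        · refine ⟨(p.1, p.2 - 3), ⟨h1, by omega, by omega, by omega⟩,
            (0,3), by simp, ?_⟩
          ext <;> simp

lemma nsmul_eq_Bt (t : ℕ) :
    t • ({(0,0), (1,1), (3,0), (0,3)} : Finset (ℤ × ℤ)) = Bt t := by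
  induction t with
  | zero =>
      rw [zero_nsmul]
      ext p
      simp only [mem_Bt, Finset.mem_zero]
      constructor
      · rintro rfl; refine ⟨le_refl _, le_refl _, by norm_num, by norm_num⟩
      · rintro ⟨h1, h2, h3, h4⟩
        have : p.1 = 0 ∧ p.2 = 0 := by push_cast at h3; omega
        ext <;> simp [this.1, this.2]
  | succ n ih =>
      rw [succ_nsmul, ih, Bt_add]

lemma Bt_zero : Bt 0 = {((0:ℤ),(0:ℤ))} := by
  ext p
  simp only [mem_Bt, Finset.mem_singleton, Prod.ext_iff]
  push_cast
  omega

lemma Bt_succ (t : ℕ) :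
    Bt (t+1) = Bt t ∪
      ((Finset.range t).image (fun j : ℕ => ((3*j+2 : ℤ), (3*(t:ℤ)-1-3*j)))
      ∪ ((Finset.range (t+1)).image (fun j : ℕ => ((3*j+1 : ℤ), (3*(t:ℤ)+1-3*j)))
      ∪ (Finset.range (t+2)).image (fun j : ℕ => ((3*j : ℤ), (3*(t:ℤ)+3-3*j))))) := by
  ext p
  simp only [mem_Bt, Finset.mem_union, Finset.mem_image, Finset.mem_range, Prod.ext_iff]
  push_cast
  constructor
  · rintro ⟨h1, h2, h3, h4⟩
    by_cases hs0 : p.1 + p.2 ≤ 3*(t:ℤ)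
    · left; omega
    · by_cases hs1 : p.1 + p.2 ≤ 3*(t:ℤ) + 1
      · right; left
        exact ⟨p.1.toNat / 3, by omega, by omega, by omega⟩
      · by_cases hs2 : p.1 + p.2 ≤ 3*(t:ℤ) + 2
        · right; right; left
          exact ⟨p.1.toNat / 3, by omega, by omega, by omega⟩
        · right; right; right
          exact ⟨p.1.toNat / 3, by omega, by omega, by omega⟩
  · rintro (h | ⟨j, hj, hx, hy⟩ | ⟨j, hj, hx, hy⟩ | ⟨j, hj, hx, hy⟩) <;> omega

lemma two_mul_card_Bt (t : ℕ) : 2 * (Bt t).card = 3 * t ^ 2 + 3 * t + 2 := by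
  induction t with
  | zero => rw [Bt_zero]; simp
  | succ n ih =>
      have h1 : ((Finset.range n).image
          (fun j : ℕ => ((3*j+2 : ℤ), (3*(n:ℤ)-1-3*j)))).card = n := by
        rw [Finset.card_image_of_injective _ ?_, Finset.card_range]
        intro a b h
        simp only [Prod.ext_iff] at h
        omega
      have h2 : ((Finset.range (n+1)).image
          (fun j : ℕ => ((3*j+1 : ℤ), (3*(n:ℤ)+1-3*j)))).card = n+1 := by
        rw [Finset.card_image_of_injective _ ?_, Finset.card_range]
        intro a b h
        simp only [Prod.ext_iff] at h
        omega
      have h3 : ((Finset.range (n+2)).image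
          (fun j : ℕ => ((3*j : ℤ), (3*(n:ℤ)+3-3*j)))).card = n+2 := by
        rw [Finset.card_image_of_injective _ ?_, Finset.card_range]
        intro a b h
        simp only [Prod.ext_iff] at h
        omega
      have d3 : Disjoint
          ((Finset.range (n+1)).image (fun j : ℕ => ((3*j+1 : ℤ), (3*(n:ℤ)+1-3*j))))
          ((Finset.range (n+2)).image (fun j : ℕ => ((3*j : ℤ), (3*(n:ℤ)+3-3*j)))) := by
        rw [Finset.disjoint_left]
        intro p hp hq
        simp only [Finset.mem_image, Finset.mem_range, Prod.ext_iff] at hp hq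
        obtain ⟨a, ha, hax, hay⟩ := hp
        obtain ⟨b, hb, hbx, hby⟩ := hq
        omega
      have d2 : Disjoint
          ((Finset.range n).image (fun j : ℕ => ((3*j+2 : ℤ), (3*(n:ℤ)-1-3*j))))
          (((Finset.range (n+1)).image (fun j : ℕ => ((3*j+1 : ℤ), (3*(n:ℤ)+1-3*j))))
            ∪ ((Finset.range (n+2)).image (fun j : ℕ => ((3*j : ℤ), (3*(n:ℤ)+3-3*j))))) := by
        rw [Finset.disjoint_left]
        intro p hp hq
        simp only [Finset.mem_union, Finset.mem_image, Finset.mem_range, Prod.ext_iff] at hp hq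
        obtain ⟨a, ha, hax, hay⟩ := hp
        rcases hq with ⟨b, hb, hbx, hby⟩ | ⟨b, hb, hbx, hby⟩ <;> omega
      have d1 : Disjoint (Bt n)
          (((Finset.range n).image (fun j : ℕ => ((3*j+2 : ℤ), (3*(n:ℤ)-1-3*j))))
          ∪ (((Finset.range (n+1)).image (fun j : ℕ => ((3*j+1 : ℤ), (3*(n:ℤ)+1-3*j))))
            ∪ ((Finset.range (n+2)).image (fun j : ℕ => ((3*j : ℤ), (3*(n:ℤ)+3-3*j)))))) := by
        rw [Finset.disjoint_left]
        intro p hp hq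
        rw [mem_Bt] at hp
        simp only [Finset.mem_union, Finset.mem_image, Finset.mem_range, Prod.ext_iff] at hq
        obtain ⟨h1', h2', h3', h4'⟩ := hp
        rcases hq with ⟨b, hb, hbx, hby⟩ | ⟨b, hb, hbx, hby⟩ | ⟨b, hb, hbx, hby⟩ <;> omega
      rw [Bt_succ n, Finset.card_union_of_disjoint d1, Finset.card_union_of_disjoint d2,
        Finset.card_union_of_disjoint d3, h1, h2, h3]
      nlinarith [ih]

/-- For `A = {(0,0),(1,1),(3,0),(0,3)} ⊂ ℤ²`, `|tA| = (3t² + 3t + 2)/2` for every `t ≥ 0`. -/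
theorem stmt_5 (A : Finset (ℤ × ℤ))
    (hA : A = {(0,0), (1,1), (3,0), (0,3)}) :
    ∀ t : ℕ, 2 * (t • A).card = 3 * t ^ 2 + 3 * t + 2 := by
  subst hA
  intro t
  rw [nsmul_eq_Bt]
  exact two_mul_card_Bt t
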